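/- For every integer p ≥ 2 and every real λ > 0, ∫_0^∞ e^{−t − λ t^p} dt = ∫_0^∞ e^{−t} / (1 + p·λ·t^{p−1}·τ(t)^{p−1}) dt, where for each t ≥ 0, τ(t) denotes the unique real number in (0, 1] satisfying λ·t^{p−1}·τ(t)^p + τ(t) = 1. -/

import Mathlib

open Set MeasureTheory

theorem integral_exp_superexp_eq (p : ℕ) (hp : 2 ≤ p) (lam : ℝ) (hlam : 0 < lam)
    (tau : ℝ → ℝ)
    (htau : ∀ t : ℝ, 0 ≤ t →
      tau t ∈ Set.Ioc (0 : ℝ) 1 ∧ lam * t ^ (p - 1) * tau t ^ p + tau t = 1) :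
    (∫ t in Set.Ioi (0 : ℝ), Real.exp (-t - lam * t ^ p))
      = ∫ t in Set.Ioi (0 : ℝ),
          Real.exp (-t) / (1 + (p : ℝ) * lam * t ^ (p - 1) * tau t ^ (p - 1)) := by
  have hp1 : p - 1 + 1 = p := Nat.succ_pred_eq_of_pos (by omega : 0 < p)
  set φ : ℝ → ℝ := fun x => x + lam * x ^ p with hφ
  set f' : ℝ → ℝ := fun x => 1 + (p : ℝ) * lam * x ^ (p - 1) with hf'
  set g : ℝ → ℝ := fun s =>
      Real.exp (-s) / (1 + (p : ℝ) * lam * s ^ (p - 1) * tau s ^ (p - 1)) with hg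
  -- derivative
  have hderiv : ∀ x : ℝ, HasDerivAt φ (f' x) x := by
    intro x
    have h1 : HasDerivAt (fun x : ℝ => x ^ p) ((p : ℝ) * x ^ (p - 1)) x :=
      hasDerivAt_pow p x
    have := (hasDerivAt_id x).add ((h1.const_mul lam))
    exact this.congr_deriv (by simp only [hf']; ring)
  -- strict monotonicity of φ on Ici 0
  have hmono : StrictMonoOn φ (Ici (0 : ℝ)) := by
    intro x hx y hy hxy
    have : x ^ p < y ^ p := pow_lt_pow_left₀ hxy hx (by omega)
    have := mul_lt_mul_of_pos_left this hlam
    simpa [hφ] using add_lt_add hxy this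
  -- image of Ioi 0 under φ is Ioi 0
  have himg : φ '' Ioi 0 = Ioi 0 := by
    apply Subset.antisymm
    · rintro _ ⟨x, hx, rfl⟩
      have hx : 0 < x := hx
      have : 0 < lam * x ^ p := mul_pos hlam (pow_pos hx p)
      simp only [hφ, mem_Ioi]
      positivity
    · intro s hs
      have hs : 0 < s := hs
      obtain ⟨⟨hτpos, hτle⟩, heq⟩ := htau s hs.le
      refine ⟨s * tau s, mul_pos hs hτpos, ?_⟩
      have hsp : s ^ p = s * s ^ (p - 1) := by
        conv_lhs => rw [← hp1, pow_succ]
        ring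
      simp only [hφ, mul_pow, hsp]
      nlinarith [heq]
  -- uniqueness of tau: for t ≥ 0, any σ > 0 with lam*t^(p-1)*σ^p + σ = 1 equals tau t
  have huniq : ∀ t : ℝ, 0 ≤ t → ∀ σ : ℝ, 0 < σ →
      lam * t ^ (p - 1) * σ ^ p + σ = 1 → σ = tau t := by
    intro t ht σ hσ hσeq
    obtain ⟨⟨hτpos, _⟩, heq⟩ := htau t ht
    have hc : 0 ≤ lam * t ^ (p - 1) := by positivity
    have hsm : StrictMonoOn (fun y : ℝ => lam * t ^ (p - 1) * y ^ p + y) (Ici 0) := by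
      intro a ha b hb hab
      have : a ^ p ≤ b ^ p := pow_le_pow_left₀ ha hab.le p
      have := mul_le_mul_of_nonneg_left this hc
      dsimp only
      linarith
    exact hsm.injOn (le_of_lt hσ) (le_of_lt hτpos) (by rw [hσeq, heq])
  -- change of variables
  have hcv := integral_image_eq_integral_abs_deriv_smul (f := φ) (f' := f')
      measurableSet_Ioi (fun x _ => (hderiv x).hasDerivWithinAt)
      (hmono.injOn.mono Ioi_subset_Ici_self) g
  rw [himg] at hcv
  rw [show (∫ t in Set.Ioi (0 : ℝ),
        Real.exp (-t) / (1 + (p : ℝ) * lam * t ^ (p - 1) * tau t ^ (p - 1)))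
      = ∫ s in Ioi (0 : ℝ), g s from rfl, hcv]
  apply setIntegral_congr_fun measurableSet_Ioi
  intro x hx
  have hx : 0 < x := hx
  have hφx : 0 < φ x := by
    have : 0 < lam * x ^ p := mul_pos hlam (pow_pos hx p)
    simp only [hφ]; positivity
  -- tau (φ x) = x / φ x
  have hτφ : tau (φ x) = x / φ x := by
    symm
    apply huniq (φ x) hφx.le (x / φ x) (div_pos hx hφx)
    have hxp : x ^ p = x * x ^ (p - 1) := by
      conv_lhs => rw [← hp1, pow_succ]; ring
    have hφp : φ x ^ p = φ x * φ x ^ (p - 1) := by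
      conv_lhs => rw [← hp1, pow_succ]
      ring
    rw [div_pow]
    field_simp
    rw [hφp]
    have hsum : lam * x ^ p + x = φ x := by simp only [hφ]; ring
    linear_combination (φ x ^ (p - 1) * φ x) * hsum
  have hden : 1 + (p : ℝ) * lam * (φ x) ^ (p - 1) * tau (φ x) ^ (p - 1) = f' x := by
    have hcanc : φ x ^ (p - 1) * (x ^ (p - 1) / φ x ^ (p - 1)) = x ^ (p - 1) := by
      field_simp
    rw [hτφ, div_pow, mul_assoc, hcanc]
  have hf'pos : 0 < f' x := by
    have : 0 ≤ (p : ℝ) * lam * x ^ (p - 1) := by positivity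
    simp only [hf']; linarith
  simp only [hg, hden, smul_eq_mul, abs_of_pos hf'pos]
  rw [mul_div_cancel₀ _ hf'pos.ne']
  congr 1
  simp only [hφ]; ring
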